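/- Let R be an associative ring with identity and n ≥ 3 an integer. For any fixed pair of indices 1 ≤ i ≠ j ≤ n, the smallest normal subgroup of E_n(R) containing the single elementary matrix e_{ij}(1) is E_n(R) itself; that is, E_n(R) is normally generated by any elementary matrix e_{ij}(1). -/

import Mathlib

open Matrix

namespace Paper

/-! ### Generalities -/

lemma one_add_mul_aux {M : Type*} [Ring M] {x y : M} (h1 : x + y = 0) (h2 : x * y = 0) :
    (1 + x) * (1 + y) = 1 := by
  have h : (1 + x) * (1 + y) = 1 + (x + y) + x * y := by noncomm_ring
  rw [h, h1, h2, add_zero, add_zero]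

/-- The group of self-homeomorphisms of a topological space, under composition. -/
instance homeomorphGroup (X : Type*) [TopologicalSpace X] : Group (X ≃ₜ X) where
  mul a b := b.trans a
  one := Homeomorph.refl X
  inv := Homeomorph.symm
  mul_assoc a b c := rfl
  one_mul a := Homeomorph.ext fun x => rfl
  mul_one a := Homeomorph.ext fun x => rfl
  inv_mul_cancel a := Homeomorph.ext fun x => a.symm_apply_apply x

section Elementary

variable (R : Type*) [Ring R]

lemma stdBasis_cancel (n : ℕ) (i j : Fin n) (a : R) :
    Matrix.single i j a + Matrix.single i j (-a) = 0 := by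
  rw [← Matrix.single_add, add_neg_cancel, Matrix.single_zero]

/-- The elementary matrix `e_{ij}(r) = 1 + r·E_{ij}` as an invertible matrix,
i.e. an element of `GL_n(R)`. -/
def elemGL (n : ℕ) (i j : Fin n) (hij : i ≠ j) (r : R) : (Matrix (Fin n) (Fin n) R)ˣ where
  val := 1 + Matrix.single i j r
  inv := 1 + Matrix.single i j (-r)
  val_inv := one_add_mul_aux (stdBasis_cancel R n i j r)
    (Matrix.single_mul_single_of_ne (c := r) i j _ (Ne.symm hij) (-r))
  inv_val := one_add_mul_aux
    (by have := stdBasis_cancel R n i j (-r); rwa [neg_neg] at this)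
    (Matrix.single_mul_single_of_ne (c := -r) i j _ (Ne.symm hij) r)

/-- The elementary group `E_n(R)`: the subgroup of `GL_n(R)` generated by all
elementary matrices. -/
def ElementaryGroup (n : ℕ) : Subgroup (Matrix (Fin n) (Fin n) R)ˣ :=
  Subgroup.closure { A | ∃ (i j : Fin n) (hij : i ≠ j) (r : R), A = elemGL R n i j hij r }

lemma elemGL_mem (n : ℕ) (i j : Fin n) (hij : i ≠ j) (r : R) :
    elemGL R n i j hij r ∈ ElementaryGroup R n :=
  Subgroup.subset_closure ⟨i, j, hij, r, rfl⟩

/-- The diagonal matrix with `-1` at places `i`, `j` and `1` elsewhere. -/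
def negPairDiag (n : ℕ) (i j : Fin n) : Matrix (Fin n) (Fin n) R :=
  Matrix.diagonal fun k => if k = i ∨ k = j then -1 else 1

lemma negPairDiag_mul_self (n : ℕ) (i j : Fin n) :
    negPairDiag R n i j * negPairDiag R n i j = 1 := by
  rw [negPairDiag, Matrix.diagonal_mul_diagonal]
  have h : (fun k => (if k = i ∨ k = j then (-1 : R) else 1) *
      (if k = i ∨ k = j then (-1 : R) else 1)) = fun _ => (1 : R) := by
    funext k
    by_cases h : k = i ∨ k = j <;> simp [h]
  rw [h, Matrix.diagonal_one]

/-- The matrix `negPairDiag` as an invertible matrix. -/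
def negPairGL (n : ℕ) (i j : Fin n) : (Matrix (Fin n) (Fin n) R)ˣ :=
  ⟨negPairDiag R n i j, negPairDiag R n i j,
    negPairDiag_mul_self R n i j, negPairDiag_mul_self R n i j⟩

/-- The matrix `A_{i,i+1}` (0-indexed: diagonal entries `i` and `i+1` equal `-1`). -/
def APair (n : ℕ) (i : Fin (n - 1)) : (Matrix (Fin n) (Fin n) R)ˣ :=
  negPairGL R n ⟨(i : ℕ), by have := i.isLt; omega⟩ ⟨(i : ℕ) + 1, by have := i.isLt; omega⟩

/-- `E_n(R, 2R)`: the smallest normal subgroup of `E_n(R)` containing all elementary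
matrices `e_{ij}(s)` with `s ∈ 2R`. -/
def RelElementaryGroup (n : ℕ) : Subgroup ↥(ElementaryGroup R n) :=
  Subgroup.normalClosure
    { x : ↥(ElementaryGroup R n) | ∃ (i j : Fin n) (hij : i ≠ j) (r : R),
        x.val = elemGL R n i j hij (2 * r) }

end Elementary

section Symplectic

variable (S : Type*) [CommRing S]

/-- The index involution `σ` on `{0, …, 2n-1}`: `σk = k + n` if `k < n`, else `σk = k - n`. -/
def sigIdx (n : ℕ) (k : Fin (2 * n)) : Fin (2 * n) :=
  if h : (k : ℕ) < n then ⟨(k : ℕ) + n, by omega⟩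
  else ⟨(k : ℕ) - n, by have := k.isLt; omega⟩

lemma sigIdx_ne (n : ℕ) (k : Fin (2 * n)) : sigIdx n k ≠ k := by
  have hk := k.isLt
  unfold sigIdx
  split_ifs with h <;>
    · intro hEq
      have h2 := congrArg Fin.val hEq
      simp only [Fin.val_mk] at h2 -- may need adjusting
      omega

lemma sigIdx_inj (n : ℕ) {k l : Fin (2 * n)} (h : k ≠ l) : sigIdx n k ≠ sigIdx n l := by
  have hk := k.isLt
  have hl := l.isLt
  have hkl : (k : ℕ) ≠ (l : ℕ) := fun hc => h (Fin.ext hc)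
  unfold sigIdx
  split_ifs with h1 h2 h2 <;>
    · intro hEq
      have h3 := congrArg Fin.val hEq
      simp only [Fin.val_mk] at h3
      omega

/-- The symplectic elementary matrix `ρ_{ij}(a)`, as a matrix.  When `j = σi` it is
`1 + a E_{i,σi}`; otherwise it is `1 + a E_{ij} - δ a E_{σj,σi}` where `δ = 1` if `i, j`
are on the same side of `n` and `δ = -1` otherwise. -/
def symElemMat (n : ℕ) (i j : Fin (2 * n)) (a : S) : Matrix (Fin (2 * n)) (Fin (2 * n)) S :=
  if j = sigIdx n i then 1 + Matrix.single i j a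
  else 1 + Matrix.single i j a -
    Matrix.single (sigIdx n j) (sigIdx n i)
      ((if ((i : ℕ) < n ↔ (j : ℕ) < n) then 1 else -1) * a)

lemma symElemMat_mul_neg (n : ℕ) (i j : Fin (2 * n)) (hij : i ≠ j) (a : S) :
    symElemMat S n i j a * symElemMat S n i j (-a) = 1 := by
  unfold symElemMat
  set d : S := if ((i : ℕ) < n ↔ (j : ℕ) < n) then 1 else -1 with hd
  split_ifs with h
  · exact one_add_mul_aux (stdBasis_cancel S _ i j a)
      (Matrix.single_mul_single_of_ne (c := a) i j _ (Ne.symm hij) (-a))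
  · rw [add_sub_assoc, add_sub_assoc]
    apply one_add_mul_aux
    · have c1 := stdBasis_cancel S _ i j a
      have c2 := stdBasis_cancel S _ (sigIdx n j) (sigIdx n i) (d * a)
      rw [mul_neg]
      calc Matrix.single i j a - Matrix.single (sigIdx n j) (sigIdx n i) (d * a) +
            (Matrix.single i j (-a) - Matrix.single (sigIdx n j) (sigIdx n i) (-(d * a)))
          = (Matrix.single i j a + Matrix.single i j (-a)) -
            (Matrix.single (sigIdx n j) (sigIdx n i) (d * a) +
              Matrix.single (sigIdx n j) (sigIdx n i) (-(d * a))) := by abel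
        _ = 0 := by rw [c1, c2, sub_zero]
    · simp only [sub_mul, mul_sub]
      rw [Matrix.single_mul_single_of_ne (c := a) i j _ (Ne.symm hij) (-a),
        Matrix.single_mul_single_of_ne (c := a) i j _ (Ne.symm (sigIdx_ne n j)) (d * -a),
        Matrix.single_mul_single_of_ne (c := d * a) (sigIdx n j) (sigIdx n i) _ (sigIdx_ne n i) (-a),
        Matrix.single_mul_single_of_ne (c := d * a) (sigIdx n j) (sigIdx n i) _
          (sigIdx_inj n hij) (d * -a)]
      simp

/-- The symplectic elementary matrix `ρ_{ij}(a)` as an invertible matrix. -/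
def symElemGL (n : ℕ) (i j : Fin (2 * n)) (hij : i ≠ j) (a : S) :
    (Matrix (Fin (2 * n)) (Fin (2 * n)) S)ˣ where
  val := symElemMat S n i j a
  inv := symElemMat S n i j (-a)
  val_inv := symElemMat_mul_neg S n i j hij a
  inv_val := by have := symElemMat_mul_neg S n i j hij (-a); rwa [neg_neg] at this

/-- The elementary symplectic group `Ep_{2n}(S)`, generated by all symplectic
elementary matrices. -/
def EpGroup (n : ℕ) : Subgroup (Matrix (Fin (2 * n)) (Fin (2 * n)) S)ˣ :=
  Subgroup.closure
    { A | ∃ (i j : Fin (2 * n)) (hij : i ≠ j) (a : S), A = symElemGL S n i j hij a }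

/-- The matrix `J = [[0, I_n], [-I_n, 0]]` of the standard symplectic form. -/
def Jmat (n : ℕ) : Matrix (Fin (2 * n)) (Fin (2 * n)) S :=
  Matrix.of fun i j =>
    if (i : ℕ) + n = (j : ℕ) then 1 else if (j : ℕ) + n = (i : ℕ) then -1 else 0

/-- The symplectic group `Sp_{2n}(S)`: invertible `2n × 2n` matrices `M` with
`Mᵀ * J * M = J`. -/
def SpGroup (n : ℕ) : Subgroup (Matrix (Fin (2 * n)) (Fin (2 * n)) S)ˣ where
  carrier := { M | (↑M : Matrix (Fin (2 * n)) (Fin (2 * n)) S)ᵀ * Jmat S n * ↑M = Jmat S n }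
  one_mem' := by simp
  mul_mem' := by
    intro a b ha hb
    show (↑(a * b) : Matrix (Fin (2 * n)) (Fin (2 * n)) S)ᵀ * Jmat S n * (↑(a * b) : Matrix (Fin (2 * n)) (Fin (2 * n)) S) = Jmat S n
    rw [Units.val_mul, Matrix.transpose_mul]
    calc (↑b : Matrix (Fin (2*n)) (Fin (2*n)) S)ᵀ * (↑a : Matrix (Fin (2*n)) (Fin (2*n)) S)ᵀ *
          Jmat S n * (↑a * ↑b)
        = (↑b : Matrix (Fin (2*n)) (Fin (2*n)) S)ᵀ *
            ((↑a : Matrix (Fin (2*n)) (Fin (2*n)) S)ᵀ * Jmat S n * ↑a) * ↑b := by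
          noncomm_ring
      _ = (↑b : Matrix (Fin (2*n)) (Fin (2*n)) S)ᵀ * Jmat S n * ↑b := by rw [ha]
      _ = Jmat S n := hb
  inv_mem' := by
    intro a ha
    have ha' : (↑a : Matrix (Fin (2 * n)) (Fin (2 * n)) S)ᵀ * Jmat S n *
        (↑a : Matrix (Fin (2 * n)) (Fin (2 * n)) S) = Jmat S n := ha
    show ((a⁻¹ : (Matrix (Fin (2 * n)) (Fin (2 * n)) S)ˣ) :
        Matrix (Fin (2 * n)) (Fin (2 * n)) S)ᵀ * Jmat S n *
        ((a⁻¹ : (Matrix (Fin (2 * n)) (Fin (2 * n)) S)ˣ) :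
        Matrix (Fin (2 * n)) (Fin (2 * n)) S) = Jmat S n
    set A : Matrix (Fin (2 * n)) (Fin (2 * n)) S := ↑a with hA
    set B : Matrix (Fin (2 * n)) (Fin (2 * n)) S := ((a⁻¹ :
        (Matrix (Fin (2 * n)) (Fin (2 * n)) S)ˣ) : Matrix (Fin (2 * n)) (Fin (2 * n)) S) with hB
    have h1 : A * B = 1 := a.mul_inv
    calc Bᵀ * Jmat S n * B
        = Bᵀ * (Aᵀ * Jmat S n * A) * B := by rw [ha']
      _ = (A * B)ᵀ * Jmat S n * (A * B) := by rw [Matrix.transpose_mul]; noncomm_ring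
      _ = Jmat S n := by rw [h1]; simp

end Symplectic

section Extra

variable (R : Type*) [Ring R]

/-- Index of the `(2i-1)`-th row (1-indexed), i.e. `2i` 0-indexed. -/
def bIdx0 (k : ℕ) (i : Fin k) : Fin (2 * k) := ⟨2 * (i : ℕ), by have := i.isLt; omega⟩

def bIdx1 (k : ℕ) (i : Fin k) : Fin (2 * k) := ⟨2 * (i : ℕ) + 1, by have := i.isLt; omega⟩

lemma bIdx_ne (k : ℕ) (i : Fin k) : bIdx0 k i ≠ bIdx1 k i := by
  simp only [bIdx0, bIdx1, ne_eq, Fin.mk.injEq]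
  omega

/-- The matrix `B_i = e_{2i-1,2i}(1) e_{2i,2i-1}(-1) e_{2i-1,2i}(1) e_{2i,2i-1}(-1)`
(1-indexed) in `E_{2k}(R)`. -/
def Bmat (k : ℕ) (i : Fin k) : (Matrix (Fin (2 * k)) (Fin (2 * k)) R)ˣ :=
  elemGL R (2 * k) (bIdx0 k i) (bIdx1 k i) (bIdx_ne k i) 1 *
  elemGL R (2 * k) (bIdx1 k i) (bIdx0 k i) (bIdx_ne k i).symm (-1) *
  elemGL R (2 * k) (bIdx0 k i) (bIdx1 k i) (bIdx_ne k i) 1 *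
  elemGL R (2 * k) (bIdx1 k i) (bIdx0 k i) (bIdx_ne k i).symm (-1)

end Extra

section SymplecticExtra

variable (S : Type*) [CommRing S]

def cIdx0 (n : ℕ) (i : Fin n) : Fin (2 * n) := ⟨(i : ℕ), by have := i.isLt; omega⟩

def cIdx1 (n : ℕ) (i : Fin n) : Fin (2 * n) := ⟨n + (i : ℕ), by have := i.isLt; omega⟩

lemma cIdx_ne (n : ℕ) (i : Fin n) : cIdx0 n i ≠ cIdx1 n i := by
  have := i.pos
  simp only [cIdx0, cIdx1, ne_eq, Fin.mk.injEq]
  omega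

/-- The matrix `C_i = ρ_{i,n+i}(1) ρ_{n+i,i}(-1) ρ_{i,n+i}(1) ρ_{n+i,i}(-1)` in
`Sp_{2n}(S)`. -/
def Cmat (n : ℕ) (i : Fin n) : (Matrix (Fin (2 * n)) (Fin (2 * n)) S)ˣ :=
  symElemGL S n (cIdx0 n i) (cIdx1 n i) (cIdx_ne n i) 1 *
  symElemGL S n (cIdx1 n i) (cIdx0 n i) (cIdx_ne n i).symm (-1) *
  symElemGL S n (cIdx0 n i) (cIdx1 n i) (cIdx_ne n i) 1 *
  symElemGL S n (cIdx1 n i) (cIdx0 n i) (cIdx_ne n i).symm (-1)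

/-- The equivalence `Fin n ⊕ Fin n ≃ Fin (2 * n)`. -/
def finDouble (n : ℕ) : Fin n ⊕ Fin n ≃ Fin (2 * n) :=
  finSumFinEquiv.trans (finCongr (two_mul n).symm)

/-- The block-diagonal matrix `diag(A, B)` as a `2n × 2n` matrix. -/
def blockDiag2 (n : ℕ) (A B : Matrix (Fin n) (Fin n) S) :
    Matrix (Fin (2 * n)) (Fin (2 * n)) S :=
  Matrix.reindex (finDouble n) (finDouble n) (Matrix.fromBlocks A 0 0 B)

lemma blockDiag2_mul (n : ℕ) (A B A' B' : Matrix (Fin n) (Fin n) S) :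
    blockDiag2 S n A B * blockDiag2 S n A' B' = blockDiag2 S n (A * A') (B * B') := by
  unfold blockDiag2
  rw [Matrix.reindex_apply, Matrix.reindex_apply, Matrix.reindex_apply,
    Matrix.submatrix_mul_equiv, Matrix.fromBlocks_multiply]
  simp

lemma blockDiag2_one (n : ℕ) : blockDiag2 S n 1 1 = 1 := by
  unfold blockDiag2
  rw [Matrix.reindex_apply, Matrix.fromBlocks_one, Matrix.submatrix_one_equiv]

/-- The hyperbolic embedding `A ↦ diag(A, (Aᵀ)⁻¹) = diag(A, (A⁻¹)ᵀ)` from `GL_n(S)`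
to `GL_{2n}(S)`. -/
def hypGL (n : ℕ) (A : (Matrix (Fin n) (Fin n) S)ˣ) :
    (Matrix (Fin (2 * n)) (Fin (2 * n)) S)ˣ where
  val := blockDiag2 S n ↑A ((↑(A⁻¹) : Matrix (Fin n) (Fin n) S)ᵀ)
  inv := blockDiag2 S n ↑(A⁻¹) ((↑A : Matrix (Fin n) (Fin n) S)ᵀ)
  val_inv := by
    rw [blockDiag2_mul, ← Matrix.transpose_mul, A.mul_inv, Matrix.transpose_one,
      blockDiag2_one]
  inv_val := by
    rw [blockDiag2_mul, ← Matrix.transpose_mul, A.inv_mul, Matrix.transpose_one,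
      blockDiag2_one]

end SymplecticExtra



section Statement5Proof

variable {R : Type*} [Ring R] {n : ℕ}

lemma stdBasisMatrix_neg' (i j : Fin n) (r : R) :
    Matrix.single i j (-r) = -(Matrix.single i j r) :=
  eq_neg_of_add_eq_zero_left (by rw [← Matrix.single_add, neg_add_cancel,
    Matrix.single_zero])

lemma elemGL_inv (i j : Fin n) (hij : i ≠ j) (r : R) :
    (elemGL R n i j hij r)⁻¹ = elemGL R n i j hij (-r) :=
  Units.ext rfl

lemma elemGL_commutator (a b c : Fin n) (hab : a ≠ b) (hbc : b ≠ c) (hac : a ≠ c) (r s : R) :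
    elemGL R n a b hab r * elemGL R n b c hbc s * elemGL R n a b hab (-r) *
      elemGL R n b c hbc (-s) = elemGL R n a c hac (r * s) := by
  apply Units.ext
  show (1 + Matrix.single a b r) * (1 + Matrix.single b c s) *
      (1 + Matrix.single a b (-r)) * (1 + Matrix.single b c (-s)) =
      1 + Matrix.single a c (r * s)
  rw [stdBasisMatrix_neg', stdBasisMatrix_neg']
  set X := Matrix.single a b r with hX
  set Y := Matrix.single b c s with hY
  set Z := Matrix.single a c (r * s) with hZ
  have hXY : X * Y = Z := Matrix.single_mul_single_same (c := r) a b c s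
  have hX2 : X * X = 0 := Matrix.single_mul_single_of_ne (c := r) a b _ (Ne.symm hab) r
  have hY2 : Y * Y = 0 := Matrix.single_mul_single_of_ne (c := s) b c _ (Ne.symm hbc) s
  have hYX : Y * X = 0 := Matrix.single_mul_single_of_ne (c := s) b c _ (Ne.symm hac) r
  have hZX : Z * X = 0 := Matrix.single_mul_single_of_ne (c := (r * s)) a c _ (Ne.symm hac) r
  have hZY : Z * Y = 0 := Matrix.single_mul_single_of_ne (c := (r * s)) a c _ (Ne.symm hbc) s
  calc (1 + X) * (1 + Y) * (1 + -X) * (1 + -Y)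
      = (1 + X + Y + X * Y) * (1 + -X) * (1 + -Y) := by noncomm_ring
    _ = (1 + X + Y + Z) * (1 + -X) * (1 + -Y) := by rw [hXY]
    _ = (1 + Y + Z - X * X - Y * X - Z * X) * (1 + -Y) := by noncomm_ring
    _ = (1 + Y + Z) * (1 + -Y) := by rw [hX2, hYX, hZX]; noncomm_ring
    _ = 1 + Z - Y * Y - Z * Y := by noncomm_ring
    _ = 1 + Z := by rw [hY2, hZY]; noncomm_ring

lemma exists_third (hn : 3 ≤ n) (i j : Fin n) : ∃ k : Fin n, k ≠ i ∧ k ≠ j := by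
  by_contra h
  push_neg at h
  have hsub : (Finset.univ : Finset (Fin n)) ⊆ {i, j} := by
    intro k _
    rcases eq_or_ne k i with rfl | hk
    · simp
    · simp [h k hk]
  have hcard := Finset.card_le_card hsub
  simp only [Finset.card_univ, Fintype.card_fin] at hcard
  have : ({i, j} : Finset (Fin n)).card ≤ 2 := Finset.card_insert_le i {j} |>.trans (by simp)
  omega

end Statement5Proof

/-- The elementary matrix as an element of the elementary group. -/
def epsGL (R : Type*) [Ring R] (n : ℕ) (a b : Fin n) (hab : a ≠ b) (r : R) :
    ↥(ElementaryGroup R n) :=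
  ⟨elemGL R n a b hab r, elemGL_mem R n a b hab r⟩

lemma epsGL_inv (R : Type*) [Ring R] (n : ℕ) (a b : Fin n) (hab : a ≠ b) (r : R) :
    (epsGL R n a b hab r)⁻¹ = epsGL R n a b hab (-r) :=
  Subtype.ext (elemGL_inv a b hab r)

lemma epsGL_commutator (R : Type*) [Ring R] (n : ℕ) (a b c : Fin n)
    (hab : a ≠ b) (hbc : b ≠ c) (hac : a ≠ c) (r s : R) :
    epsGL R n a b hab r * epsGL R n b c hbc s * epsGL R n a b hab (-r) *
      epsGL R n b c hbc (-s) = epsGL R n a c hac (r * s) := by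
  apply Subtype.ext
  show (elemGL R n a b hab r * elemGL R n b c hbc s * elemGL R n a b hab (-r) *
    elemGL R n b c hbc (-s) : (Matrix (Fin n) (Fin n) R)ˣ) = elemGL R n a c hac (r * s)
  exact elemGL_commutator a b c hab hbc hac r s

lemma epsGL_mem_main (R : Type*) [Ring R] (n : ℕ) (hn : 3 ≤ n) (i j : Fin n) (hij : i ≠ j)
    (a b : Fin n) (hab : a ≠ b) (r : R) :
    epsGL R n a b hab r ∈ Subgroup.normalClosure {epsGL R n i j hij 1} := by
  set N := Subgroup.normalClosure {epsGL R n i j hij 1} with hN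
  have hNorm : N.Normal := Subgroup.normalClosure_normal
  have hg : epsGL R n i j hij 1 ∈ N := Subgroup.subset_normalClosure (Set.mem_singleton _)
  have comm1 : ∀ (x y : ↥(ElementaryGroup R n)), x ∈ N → y * x * y⁻¹ * x⁻¹ ∈ N :=
    fun x y hx => mul_mem (hNorm.conj_mem x hx y) (inv_mem hx)
  have comm2 : ∀ (x y : ↥(ElementaryGroup R n)), x ∈ N → x * y * x⁻¹ * y⁻¹ ∈ N := by
    intro x y hx
    have h : x * y * x⁻¹ * y⁻¹ = x * (y * x⁻¹ * y⁻¹) := by group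
    rw [h]
    exact mul_mem hx (hNorm.conj_mem x⁻¹ (inv_mem hx) y)
  have key : ∀ (a b c : Fin n) (hab : a ≠ b) (hbc : b ≠ c) (hac : a ≠ c) (r s : R),
      (epsGL R n a b hab r ∈ N ∨ epsGL R n b c hbc s ∈ N) →
      epsGL R n a c hac (r * s) ∈ N := by
    rintro a b c hab hbc hac r s (h | h)
    · rw [← epsGL_commutator R n a b c hab hbc hac r s,
        ← epsGL_inv R n a b hab r, ← epsGL_inv R n b c hbc s]
      exact comm2 _ _ h
    · rw [← epsGL_commutator R n a b c hab hbc hac r s,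
        ← epsGL_inv R n a b hab r, ← epsGL_inv R n b c hbc s]
      exact comm1 _ _ h
  have factA : ∀ (k : Fin n) (hki : k ≠ i) (hkj : k ≠ j) (r : R),
      epsGL R n k j hkj r ∈ N := by
    intro k hki hkj r
    have := key k i j hki hij hkj r 1 (Or.inr hg)
    rwa [mul_one] at this
  have factB : ∀ (l : Fin n) (hli : i ≠ l) (hlj : j ≠ l) (r : R),
      epsGL R n i l hli r ∈ N := by
    intro l hli hlj r
    have := key i j l hij hlj hli 1 r (Or.inl hg)
    rwa [one_mul] at this
  have factC : ∀ (k : Fin n) (hki : k ≠ i) (hkj : k ≠ j) (r : R),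
      epsGL R n j k hkj.symm r ∈ N := by
    intro k hki hkj r
    have := key j i k hij.symm hki.symm hkj.symm r 1
      (Or.inr (factB k hki.symm hkj.symm 1))
    rwa [mul_one] at this
  have factF : ∀ (r : R), epsGL R n i j hij r ∈ N := by
    intro r
    obtain ⟨k, hki, hkj⟩ := exists_third hn i j
    have := key i k j hki.symm hkj hij r 1 (Or.inr (factA k hki hkj 1))
    rwa [mul_one] at this
  have factE : ∀ (r : R), epsGL R n j i hij.symm r ∈ N := by
    intro r
    obtain ⟨k, hki, hkj⟩ := exists_third hn i j
    have := key j k i hkj.symm hki hij.symm r 1 (Or.inl (factC k hki hkj r))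
    rwa [mul_one] at this
  rcases eq_or_ne a i with rfl | hai
  · rcases eq_or_ne b j with rfl | hbj
    · exact factF r
    · exact factB b hab (Ne.symm hbj) r
  · rcases eq_or_ne a j with rfl | haj
    · rcases eq_or_ne b i with rfl | hbi
      · exact factE r
      · exact factC b hbi (Ne.symm hab) r
    · rcases eq_or_ne b j with rfl | hbj
      · exact factA a hai haj r
      · have := key a j b haj (Ne.symm hbj) hab r 1 (Or.inl (factA a hai haj r))
        rwa [mul_one] at this


/-- For `n ≥ 3`, the group `E_n(R)` is normally generated by any single
elementary matrix `e_{ij}(1)`. -/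
theorem statement5 (R : Type*) [Ring R] (n : ℕ) (hn : 3 ≤ n) (i j : Fin n) (hij : i ≠ j) :
    Subgroup.normalClosure
      {(⟨elemGL R n i j hij 1, elemGL_mem R n i j hij 1⟩ : ↥(ElementaryGroup R n))} = ⊤ := by
  rw [eq_top_iff]
  rintro ⟨A, hA⟩ -
  exact Subgroup.closure_induction
    (p := fun g hg => (⟨g, hg⟩ : ↥(ElementaryGroup R n)) ∈
      Subgroup.normalClosure {(⟨elemGL R n i j hij 1, elemGL_mem R n i j hij 1⟩ :
        ↥(ElementaryGroup R n))})
    (fun x hx => by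
      obtain ⟨a, b, hab, r, rfl⟩ := hx
      exact epsGL_mem_main R n hn i j hij a b hab r)
    (one_mem _)
    (fun x y hx hy px py => mul_mem px py)
    (fun x hx px => inv_mem px)
    hA

end Paper
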